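/- Let L be a lattice with smallest element 0 and → a D-implication on L. Define x' := x → 0. Then (L, ∨, ∧, ') is a dually weakly orthomodular lattice, i.e., for all a ≤ b in L, b ∧ (a ∨ b') = a. -/
import Mathlib

/-- A D-implication on a lattice with 0 yields a dually weakly orthomodular lattice via x' := x → 0. -/
theorem stmt_4 {L : Type*} [Lattice L] [OrderBot L] (impl : L → L → L)
    (h1 : ∀ x y : L, impl (x ⊔ y) x = impl y x)
    (h2 : ∀ x y z : L, x ⊔ y ⊔ impl (x ⊔ z) y = impl z (x ⊔ y))
    (h3 : ∀ x y : L, (x ⊔ y) ⊓ impl x y = y) :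
    ∀ a b : L, a ≤ b → b ⊓ (a ⊔ impl b ⊥) = a := by
  intro a b hab
  have key := h2 a ⊥ b
  rw [sup_bot_eq, sup_eq_right.mpr hab] at key
  rw [key]
  have := h3 b a
  rwa [sup_eq_left.mpr hab] at this
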